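/- arXiv:2108.05003 — 3 statements merged into one kernel-verified Lean document; each statement's English description precedes it below -/
import Mathlib

section
/- Let A and B be *-algebras and ⟨L, _A[·,·], [·,·]_B⟩ an A, B imprimitivity bimodule. Suppose S is a non-degenerate *-representation of B on a Hilbert space X such that the map (r,s) ↦ S([s,r]_B) is an operator inner product on L (S is L-positive) and the induced representation T = Ind(S; L) of A on the Hilbert space L ⊗_S X exists. Then T is a *-representation: T(a*) = T(a)* and T(a a') = T(a) T(a') for all a, a' ∈ A. -/
open scoped ComplexOrder TensorProduct

/-- If `L` is an `A, B` imprimitivity bimodule, `S` a non-degenerate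
`*`-representation of `B` on `X` which is `L`-positive, and the induced
representation `T = Ind(S; L)` of `A` on the Hilbert space `L ⊗_S X` exists
(given here by a densely-ranged isometry `ι` of the algebraic tensor product and
operators `T a` acting by `r ⊗ ξ ↦ (a·r) ⊗ ξ`), then `T` is a
`*`-representation: `T(a*) = T(a)*` and `T(a a') = T(a) T(a')`. -/
theorem stmt_3 {A B L : Type*}
    [Ring A] [Algebra ℂ A] [StarRing A] [StarModule ℂ A]
    [Ring B] [Algebra ℂ B] [StarRing B] [StarModule ℂ B]
    [AddCommGroup L] [Module ℂ L]
    {X : Type*} [NormedAddCommGroup X] [InnerProductSpace ℂ X] [CompleteSpace X]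
    (lact : A → L → L) (ract : L → B → L)
    (bA : L → L → A) (bB : L → L → B)
    -- module-type axioms
    (hlact_add : ∀ (a : A) (r s : L), lact a (r + s) = lact a r + lact a s)
    (hlact_mul : ∀ (a a' : A) (r : L), lact (a * a') r = lact a (lact a' r))
    (hract_add : ∀ (r s : L) (b : B), ract (r + s) b = ract r b + ract s b)
    -- right B-rigged left A-module axioms
    (hbB_lin : ∀ (c : ℂ) (r s s' : L), bB r (c • s + s') = c • bB r s + bB r s')
    (hbB_star : ∀ r s : L, star (bB r s) = bB s r)
    (hbB_ract : ∀ (r s : L) (b : B), bB r (ract s b) = bB r s * b)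
    (hbB_lact : ∀ (a : A) (r s : L), bB (lact a r) s = bB r (lact (star a) s))
    -- left A-rigged right B-module axioms
    (hbA_star : ∀ r s : L, star (bA r s) = bA s r)
    (hbA_lact : ∀ (a : A) (r s : L), bA (lact a r) s = a * bA r s)
    -- imprimitivity associativity
    (hassoc : ∀ r s t : L, lact (bA r s) t = ract r (bB s t))
    -- S is a non-degenerate *-representation of B on X
    (S : B → X →L[ℂ] X)
    (hS_add : ∀ b b' : B, S (b + b') = S b + S b')
    (hS_smul : ∀ (c : ℂ) (b : B), S (c • b) = c • S b)
    (hS_mul : ∀ b b' : B, S (b * b') = (S b).comp (S b'))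
    (hS_star : ∀ b : B, S (star b) = ContinuousLinearMap.adjoint (S b))
    (hS_nd : closure (↑(Submodule.span ℂ {y : X | ∃ (b : B) (ξ : X), y = S b ξ}))
      = (Set.univ : Set X))
    -- S is L-positive
    (hpos : ∀ (n : ℕ) (t : Fin n → L) (ξ : Fin n → X),
      (0 : ℂ) ≤ ∑ i, ∑ j, (inner ℂ (ξ i) (S (bB (t j) (t i)) (ξ j)) : ℂ))
    -- the Hilbert space L ⊗_S X and the induced operators
    {Y : Type*} [NormedAddCommGroup Y] [InnerProductSpace ℂ Y] [CompleteSpace Y]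
    (ι : TensorProduct ℂ L X →ₗ[ℂ] Y)
    (hι_dense : DenseRange ι)
    (hι_inner : ∀ (r t : L) (ξ η : X),
      (inner ℂ (ι (t ⊗ₜ[ℂ] η)) (ι (r ⊗ₜ[ℂ] ξ)) : ℂ) = (inner ℂ η (S (bB t r) ξ) : ℂ))
    (T : A → Y →L[ℂ] Y)
    (hT : ∀ (a : A) (r : L) (ξ : X), T a (ι (r ⊗ₜ[ℂ] ξ)) = ι (lact a r ⊗ₜ[ℂ] ξ)) :
    (∀ a : A, T (star a) = ContinuousLinearMap.adjoint (T a)) ∧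
    (∀ a a' : A, T (a * a') = (T a).comp (T a')) := by
  classical
  -- Two continuous maps agreeing on the range of ι agree everywhere
  have ext_op : ∀ (F G : Y →L[ℂ] Y),
      (∀ x : TensorProduct ℂ L X, F (ι x) = G (ι x)) → F = G := by
    intro F G h
    have hfun : (F : Y → Y) = G := by
      apply Continuous.ext_on hι_dense F.continuous G.continuous
      rintro y ⟨x, rfl⟩
      exact h x
    exact ContinuousLinearMap.ext fun y => congrFun hfun y
  -- Two vectors with equal inner products against the dense range coincide
  have eq_vec : ∀ u v : Y,
      (∀ z : TensorProduct ℂ L X, (inner ℂ u (ι z) : ℂ) = inner ℂ v (ι z)) → u = v := by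
    intro u v h
    have h0 : ∀ w ∈ Set.range ι, (inner ℂ (u - v) w : ℂ) = 0 := by
      rintro w ⟨z, rfl⟩
      rw [inner_sub_left, h z, sub_self]
    have hcont : Continuous fun w : Y => (inner ℂ (u - v) w : ℂ) :=
      continuous_const.inner continuous_id
    have hall : (fun w : Y => (inner ℂ (u - v) w : ℂ)) = fun _ => 0 :=
      Continuous.ext_on hι_dense hcont continuous_const h0
    have : (inner ℂ (u - v) (u - v) : ℂ) = 0 := congrFun hall (u - v)
    have : u - v = 0 := inner_self_eq_zero.mp this
    exact sub_eq_zero.mp this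
  constructor
  · intro a
    apply ext_op
    intro x
    apply eq_vec
    intro z
    rw [ContinuousLinearMap.adjoint_inner_left]
    induction x using TensorProduct.induction_on with
    | zero => simp
    | add x₁ x₂ h₁ h₂ => simp [map_add, inner_add_left, h₁, h₂]
    | tmul r ξ =>
      induction z using TensorProduct.induction_on with
      | zero => simp
      | add z₁ z₂ h₁ h₂ => simp [map_add, inner_add_right, h₁, h₂]
      | tmul t η =>
        rw [hT, hT, hι_inner, hι_inner, hbB_lact, star_star]
  · intro a a'
    apply ext_op
    intro x
    induction x using TensorProduct.induction_on with
    | zero => simp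
    | add x₁ x₂ h₁ h₂ => simp [map_add, h₁, h₂]
    | tmul r ξ =>
      simp only [ContinuousLinearMap.comp_apply, hT, hlact_mul]
end

section
/- Let A be a *-algebra, F a two-sided *-ideal of A where A is realized as a convolution algebra of finitely supported functions f : G → ⋃_x B_x with f(x) ∈ B_x, over a discrete group G with a graded family (B_x) in a C*-algebra. For each x ∈ G let J_x be the closure of {f(x) : f ∈ F} in B_x. Then for all y, z ∈ G: B_y·J_z ⊆ J_{yz}, J_z·B_y ⊆ J_{zy}, and (J_y)* ⊆ J_{y⁻¹}. -/
/-- Discrete analogue of Lemma 3.8: if `F` is a two-sided `*`-ideal of the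
cross-sectional `*`-algebra of a graded family `(B_x)` over a discrete group
`G`, and `J_x` is the closure of `{f(x) : f ∈ F}`, then
`B_y J_z ⊆ J_{yz}`, `J_z B_y ⊆ J_{zy}` and `(J_y)* ⊆ J_{y⁻¹}`. -/
theorem stmt_10 {G : Type*} [Group G]
    {D : Type*} [NormedRing D] [StarRing D] [CStarRing D]
    [NormedAlgebra ℂ D] [StarModule ℂ D]
    (B : G → Submodule ℂ D)
    (hmul : ∀ x y : G, ∀ a ∈ B x, ∀ b ∈ B y, a * b ∈ B (x * y))
    (hstar : ∀ x : G, ∀ a ∈ B x, star a ∈ B x⁻¹)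
    -- the cross-sectional *-algebra: finitely supported sections
    (secs : Set (G → D))
    (hsecs : secs = {f | (∀ x : G, f x ∈ B x) ∧ (Set.Finite {x : G | f x ≠ 0})})
    (conv : (G → D) → (G → D) → (G → D))
    (hconv : ∀ (f g : G → D) (x : G), conv f g x = ∑ᶠ y : G, f y * g (y⁻¹ * x))
    -- F is a two-sided *-ideal
    (F : Set (G → D))
    (hF_secs : F ⊆ secs)
    (hF_add : ∀ f ∈ F, ∀ g ∈ F, f + g ∈ F)
    (hF_smul : ∀ (c : ℂ), ∀ f ∈ F, c • f ∈ F)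
    (hF_left : ∀ g ∈ secs, ∀ f ∈ F, conv g f ∈ F)
    (hF_right : ∀ g ∈ secs, ∀ f ∈ F, conv f g ∈ F)
    (hF_star : ∀ f ∈ F, (fun x : G => star (f x⁻¹)) ∈ F)
    (J : G → Set D)
    (hJ : ∀ x : G, J x = closure {d : D | ∃ f ∈ F, f x = d}) :
    ∀ y z : G,
      (∀ b ∈ B y, ∀ j ∈ J z, b * j ∈ J (y * z)) ∧
      (∀ j ∈ J z, ∀ b ∈ B y, j * b ∈ J (z * y)) ∧
      (∀ j ∈ J y, star j ∈ J y⁻¹) := by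
  classical
  intro y z
  -- the single-point section
  have hsingle : ∀ (y : G), ∀ b ∈ B y, (fun w : G => if w = y then b else 0) ∈ secs := by
    intro y b hb
    rw [hsecs]
    constructor
    · intro x
      by_cases hx : x = y
      · simp [hx, hb]
      · simp [hx]
    · apply Set.Finite.subset (Set.finite_singleton y)
      intro x hx
      by_cases h : x = y
      · simp [h]
      · simp [h] at hx
  refine ⟨?_, ?_, ?_⟩
  · intro b hb j hj
    rw [hJ] at hj ⊢
    refine map_mem_closure (by continuity : Continuous fun d : D => b * d) hj ?_
    rintro d ⟨f, hf, rfl⟩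
    set g : G → D := fun w => if w = y then b else 0 with hg
    refine ⟨conv g f, hF_left g (hsingle y b hb) f hf, ?_⟩
    rw [hconv]
    rw [finsum_eq_single _ y]
    · simp [hg, mul_assoc]
    · intro w hw
      simp [hg, hw]
  · intro j hj b hb
    rw [hJ] at hj ⊢
    refine map_mem_closure (f := fun d : D => d * b) (by continuity) hj ?_
    rintro d ⟨f, hf, rfl⟩
    set g : G → D := fun w => if w = y then b else 0 with hg
    refine ⟨conv f g, hF_right g (hsingle y b hb) f hf, ?_⟩
    rw [hconv]
    rw [finsum_eq_single _ z]
    · simp [hg, mul_assoc]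
    · intro w hw
      have hne : w⁻¹ * (z * y) ≠ y := by
        intro h
        apply hw
        rw [inv_mul_eq_iff_eq_mul] at h
        exact (mul_right_cancel h.symm)
      simp [hg, hne]
  · intro j hj
    rw [hJ] at hj ⊢
    refine map_mem_closure continuous_star hj ?_
    rintro d ⟨f, hf, rfl⟩
    exact ⟨_, hF_star f hf, by simp⟩
end

section
/- Let G be a discrete group acting on a set M = G/H (cosets of a subgroup H), and let B be a *-algebra graded by G inside a C*-algebra. Define the transformation algebra D with fibers D_x = functions φ : M → B_x (finitely supported), with product (ψφ)(m) = ψ(m)·φ(x⁻¹m) for ψ ∈ D_x, φ ∈ D_y, and involution ψ*(m) = (ψ(x m))* for ψ ∈ D_x. Then D is a graded *-algebra family over G: D_x D_y ⊆ D_{xy} and (D_x)* = D_{x⁻¹}, and the product is associative and the involution is involutive and anti-multiplicative. -/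
/-- Discrete analogue of the transformation bundle: with fibers
`D_x = {finitely supported φ : G/H → B_x}`, product
`(ψφ)(m) = ψ(m)·φ(x⁻¹ m)` and involution `ψ*(m) = (ψ(x m))*`, the family
`(D_x)_{x ∈ G}` is a graded `*`-algebra family over `G`: `D_x D_y ⊆ D_{xy}`,
`(D_x)* = D_{x⁻¹}`, the product is associative, and the involution is
involutive and anti-multiplicative. -/
theorem stmt_13 {G : Type*} [Group G] (H : Subgroup G)
    {R : Type*} [Ring R] [Algebra ℂ R] [StarRing R] [StarModule ℂ R]
    (B : G → Submodule ℂ R)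
    (hmul : ∀ x y : G, ∀ a ∈ B x, ∀ b ∈ B y, a * b ∈ B (x * y))
    (hstar : ∀ x : G, ∀ a ∈ B x, star a ∈ B x⁻¹)
    (tmul : G → (G ⧸ H → R) → (G ⧸ H → R) → (G ⧸ H → R))
    (htmul : ∀ (x : G) (ψ φ : G ⧸ H → R) (m : G ⧸ H),
      tmul x ψ φ m = ψ m * φ (x⁻¹ • m))
    (tstar : G → (G ⧸ H → R) → (G ⧸ H → R))
    (htstar : ∀ (x : G) (ψ : G ⧸ H → R) (m : G ⧸ H),
      tstar x ψ m = star (ψ (x • m)))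
    (fib : G → Set (G ⧸ H → R))
    (hfib : ∀ x : G,
      fib x = {ψ | (∀ m : G ⧸ H, ψ m ∈ B x) ∧ Set.Finite {m : G ⧸ H | ψ m ≠ 0}}) :
    (∀ x y : G, ∀ ψ ∈ fib x, ∀ φ ∈ fib y, tmul x ψ φ ∈ fib (x * y)) ∧
    (∀ x : G, ∀ ψ ∈ fib x, tstar x ψ ∈ fib x⁻¹) ∧
    (∀ (x y : G) (ψ φ χ : G ⧸ H → R),
      tmul (x * y) (tmul x ψ φ) χ = tmul x ψ (tmul y φ χ)) ∧
    (∀ (x y : G) (ψ φ : G ⧸ H → R),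
      tstar (x * y) (tmul x ψ φ) = tmul y⁻¹ (tstar y φ) (tstar x ψ)) ∧
    (∀ (x : G) (ψ : G ⧸ H → R), tstar x⁻¹ (tstar x ψ) = ψ) := by
  refine ⟨?_, ?_, ?_, ?_, ?_⟩
  · intro x y ψ hψ φ hφ
    rw [hfib] at *
    obtain ⟨hψ1, hψ2⟩ := hψ
    obtain ⟨hφ1, hφ2⟩ := hφ
    refine ⟨fun m => ?_, ?_⟩
    · rw [htmul]; exact hmul x y _ (hψ1 m) _ (hφ1 _)
    · apply Set.Finite.subset hψ2
      intro m hm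
      simp only [Set.mem_setOf_eq, htmul] at hm ⊢
      intro h; apply hm; rw [h, zero_mul]
  · intro x ψ hψ
    rw [hfib] at *
    obtain ⟨hψ1, hψ2⟩ := hψ
    refine ⟨fun m => ?_, ?_⟩
    · rw [htstar]; exact hstar x _ (hψ1 _)
    · have : {m : G ⧸ H | tstar x ψ m ≠ 0} ⊆ (x⁻¹ • ·) '' {m | ψ m ≠ 0} := by
        intro m hm
        simp only [Set.mem_setOf_eq, htstar] at hm
        refine ⟨x • m, fun h => hm (by rw [h, star_zero]), by simp⟩
      exact (hψ2.image _).subset this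
  · intro x y ψ φ χ
    funext m
    simp only [htmul, mul_assoc, mul_inv_rev, smul_smul]
  · intro x y ψ φ
    funext m
    simp only [htmul, htstar, star_mul, mul_inv_rev, smul_smul]
    congr 1
    · congr 1; group
    · congr 1; group
  · intro x ψ
    funext m
    simp [htstar, smul_smul]
end
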